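/- Let n ≥ 1, let U ⊆ ℝⁿ be open and convex, let f : ℝⁿ → ℝⁿ be continuously differentiable on U with Jacobian J_f, let xₙ ∈ U, let A : ℝⁿ → ℝⁿ be an invertible linear map, and let v ∈ U. Assume: (A1) there is ω > 0 such that for every t ∈ [0,1], writing z = t·xₙ + (1−t)·v, one has ‖A⁻¹ (J_f(xₙ) − J_f(z)) (xₙ − v)‖ ≤ ω (1−t) ‖xₙ − v‖²; and (A2) there is κ ∈ [0,1) with ‖Id − A⁻¹ J_f(xₙ)‖ ≤ κ. Then ‖(xₙ − v) − A⁻¹ (f(xₙ) − f(v))‖ ≤ (κ + (ω/2) ‖xₙ − v‖) · ‖xₙ − v‖. -/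

import Mathlib

/-- **Key estimate** in the proof of Theorem 1: under the affine covariant Lipschitz
condition (A1) along the segment from `v` to `xn` and the approximation condition (A2),
one has `‖(xn - v) - A⁻¹(f xn - f v)‖ ≤ (κ + (ω/2)‖xn - v‖)·‖xn - v‖`. -/
theorem newton_increment_estimate
    {n : ℕ} (hn : 1 ≤ n)
    (U : Set (EuclideanSpace ℝ (Fin n))) (hUopen : IsOpen U) (hUconv : Convex ℝ U)
    (f : EuclideanSpace ℝ (Fin n) → EuclideanSpace ℝ (Fin n))
    (J : EuclideanSpace ℝ (Fin n) →
      (EuclideanSpace ℝ (Fin n) →L[ℝ] EuclideanSpace ℝ (Fin n)))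
    (hf : ∀ x ∈ U, HasFDerivAt f (J x) x)
    (hJcont : ContinuousOn J U)
    (xn : EuclideanSpace ℝ (Fin n)) (hxn : xn ∈ U)
    (A : EuclideanSpace ℝ (Fin n) ≃L[ℝ] EuclideanSpace ℝ (Fin n))
    (v : EuclideanSpace ℝ (Fin n)) (hv : v ∈ U)
    (ω κ : ℝ) (hω : 0 < ω) (hκ0 : 0 ≤ κ) (hκ1 : κ < 1)
    (hA1 : ∀ t ∈ Set.Icc (0:ℝ) 1,
      ‖A.symm ((J xn - J (t • xn + (1 - t) • v)) (xn - v))‖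
        ≤ ω * (1 - t) * ‖xn - v‖ ^ 2)
    (hA2 : ‖ContinuousLinearMap.id ℝ (EuclideanSpace ℝ (Fin n))
        - (A.symm : EuclideanSpace ℝ (Fin n) →L[ℝ] EuclideanSpace ℝ (Fin n)).comp (J xn)‖
        ≤ κ) :
    ‖(xn - v) - A.symm (f xn - f v)‖ ≤ (κ + ω / 2 * ‖xn - v‖) * ‖xn - v‖ := by
  set d : EuclideanSpace ℝ (Fin n) := xn - v with hd
  set z : ℝ → EuclideanSpace ℝ (Fin n) := fun t => t • xn + (1 - t) • v with hzdef
  have hz : ∀ t ∈ Set.Icc (0:ℝ) 1, z t ∈ U := by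
    intro t ht
    have h1t : (0:ℝ) ≤ 1 - t := by linarith [ht.2]
    have := hUconv hxn hv ht.1 h1t (by ring)
    simpa [hzdef] using this
  have hzcont : Continuous z := by fun_prop
  have hzderiv : ∀ t : ℝ, HasDerivAt z d t := by
    intro t
    have h1 : HasDerivAt (fun t : ℝ => t • xn) ((1:ℝ) • xn) t :=
      (hasDerivAt_id t).smul_const xn
    have h2 : HasDerivAt (fun t : ℝ => (1 - t) • v) ((-1:ℝ) • v) t := by
      have : HasDerivAt (fun t : ℝ => 1 - t) (-1) t := by
        simpa using (hasDerivAt_id t).const_sub 1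
      exact this.smul_const v
    have := h1.add h2
    rw [show d = (1:ℝ) • xn + (-1:ℝ) • v by simp [hd, sub_eq_add_neg]]
    exact this
  have hg : ∀ t ∈ Set.Icc (0:ℝ) 1, HasDerivAt (fun s => f (z s)) ((J (z t)) d) t := by
    intro t ht
    exact (hf (z t) (hz t ht)).comp_hasDerivAt t (hzderiv t)
  have hcontJz : ContinuousOn (fun t => (J (z t)) d) (Set.Icc (0:ℝ) 1) := by
    have : ContinuousOn (fun t => J (z t)) (Set.Icc (0:ℝ) 1) :=
      hJcont.comp hzcont.continuousOn hz
    exact this.clm_apply continuousOn_const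
  have huIcc : Set.uIcc (0:ℝ) 1 = Set.Icc (0:ℝ) 1 := Set.uIcc_of_le (by norm_num)
  have hint : IntervalIntegrable (fun t => (J (z t)) d) MeasureTheory.volume 0 1 :=
    (hcontJz.mono (by rw [huIcc])).intervalIntegrable
  have hfund : f (z 1) - f (z 0) = ∫ t in (0:ℝ)..1, (J (z t)) d := by
    refine (intervalIntegral.integral_eq_sub_of_hasDerivAt
      (f := fun s => f (z s)) (f' := fun t => (J (z t)) d) ?_ hint).symm
    intro t ht
    exact hg t (by rwa [huIcc] at ht)
  have hz0 : z 0 = v := by simp [hzdef]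
  have hz1 : z 1 = xn := by simp [hzdef]
  have hmain : f xn - f v = ∫ t in (0:ℝ)..1, (J (z t)) d := by
    rw [← hz0, ← hz1]; exact hfund
  set L : EuclideanSpace ℝ (Fin n) →L[ℝ] EuclideanSpace ℝ (Fin n) :=
    (A.symm : EuclideanSpace ℝ (Fin n) →L[ℝ] EuclideanSpace ℝ (Fin n)) with hL
  have hintL : IntervalIntegrable (fun t => L ((J (z t)) d)) MeasureTheory.volume 0 1 :=
    (((L.continuous.comp_continuousOn hcontJz)).mono (by rw [huIcc])).intervalIntegrable
  have hLint : A.symm (f xn - f v) = ∫ t in (0:ℝ)..1, L ((J (z t)) d) := by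
    rw [hmain]
    exact (L.intervalIntegral_comp_comm hint).symm
  have hdiff : (xn - v) - A.symm (f xn - f v)
      = ∫ t in (0:ℝ)..1, (d - L ((J (z t)) d)) := by
    rw [hLint, ← hd,
      intervalIntegral.integral_sub intervalIntegrable_const hintL]
    simp
  have hbound : ∀ t ∈ Set.Icc (0:ℝ) 1,
      ‖d - L ((J (z t)) d)‖ ≤ κ * ‖d‖ + ω * (1 - t) * ‖d‖ ^ 2 := by
    intro t ht
    have heq : d - L ((J (z t)) d)
        = (ContinuousLinearMap.id ℝ (EuclideanSpace ℝ (Fin n)) - L.comp (J xn)) d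
          + A.symm ((J xn - J (z t)) d) := by
      simp [ContinuousLinearMap.sub_apply, hL]
      try abel
    rw [heq]
    refine (norm_add_le _ _).trans (add_le_add ?_ (hA1 t ht))
    calc ‖(ContinuousLinearMap.id ℝ (EuclideanSpace ℝ (Fin n)) - L.comp (J xn)) d‖
        ≤ ‖ContinuousLinearMap.id ℝ (EuclideanSpace ℝ (Fin n)) - L.comp (J xn)‖ * ‖d‖ :=
          ContinuousLinearMap.le_opNorm _ _
      _ ≤ κ * ‖d‖ := mul_le_mul_of_nonneg_right hA2 (norm_nonneg _)
  have hBint : IntervalIntegrable (fun t => κ * ‖d‖ + ω * (1 - t) * ‖d‖ ^ 2)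
      MeasureTheory.volume 0 1 := by
    apply Continuous.intervalIntegrable; fun_prop
  have hBval : (∫ t in (0:ℝ)..1, (κ * ‖d‖ + ω * (1 - t) * ‖d‖ ^ 2))
      = κ * ‖d‖ + ω / 2 * ‖d‖ ^ 2 := by
    have h2 : IntervalIntegrable (fun t : ℝ => ω * (1 - t) * ‖d‖ ^ 2)
        MeasureTheory.volume 0 1 := by apply Continuous.intervalIntegrable; fun_prop
    rw [intervalIntegral.integral_add intervalIntegrable_const h2]
    have heq2 : (∫ t in (0:ℝ)..1, ω * (1 - t) * ‖d‖ ^ 2)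
        = ω * ‖d‖ ^ 2 * ∫ t in (0:ℝ)..1, (1 - t) := by
      rw [← intervalIntegral.integral_const_mul]
      congr 1; ext t; ring
    have hid : (∫ t in (0:ℝ)..1, (1 - t)) = 1 / 2 := by
      rw [intervalIntegral.integral_sub intervalIntegrable_const
        (Continuous.intervalIntegrable (by fun_prop) 0 1)]
      rw [integral_id]
      simp
      norm_num
    rw [heq2, hid, intervalIntegral.integral_const]
    simp
    ring
  have hnorm : ‖∫ t in (0:ℝ)..1, (d - L ((J (z t)) d))‖
      ≤ ∫ t in (0:ℝ)..1, (κ * ‖d‖ + ω * (1 - t) * ‖d‖ ^ 2) := by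
    have habs := intervalIntegral.norm_integral_le_abs_of_norm_le
      (f := fun t => d - L ((J (z t)) d))
      (g := fun t => κ * ‖d‖ + ω * (1 - t) * ‖d‖ ^ 2)
      (μ := MeasureTheory.volume) (a := 0) (b := 1) ?_ hBint
    · refine habs.trans (le_of_eq ?_)
      rw [hBval, abs_of_nonneg]
      positivity
    · filter_upwards [MeasureTheory.ae_restrict_mem measurableSet_Ioc] with t ht
      have ht' : t ∈ Set.Icc (0:ℝ) 1 := by
        have : Set.uIoc (0:ℝ) 1 = Set.Ioc (0:ℝ) 1 := Set.uIoc_of_le (by norm_num)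
        rw [this] at ht
        exact ⟨le_of_lt ht.1, ht.2⟩
      exact hbound t ht'
  rw [hdiff]
  calc ‖∫ t in (0:ℝ)..1, (d - L ((J (z t)) d))‖
      ≤ κ * ‖d‖ + ω / 2 * ‖d‖ ^ 2 := hnorm.trans (le_of_eq hBval)
    _ = (κ + ω / 2 * ‖d‖) * ‖d‖ := by ring
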